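/- Let N be a normal subgroup of a finite group G and let p be a prime. Let P_N, P_G, P_{G/N} be Sylow p-subgroups of N, G, and G/N respectively. Then: (i) exp(P_{G/N}/P'_{G/N}) ≤ exp(P_G/P'_G), and (ii) exp(P_G/P'_G) ≤ exp(P_N/P'_N) · exp(P_{G/N}/P'_{G/N}). -/

import Mathlib

open scoped Classical

noncomputable section

/-- The `f`-th cyclotomic field, realized as the subfield of `ℂ` generated by the
`f`-th roots of unity. -/
def cycField (f : ℕ) : Subfield ℂ :=
  Subfield.closure {z : ℂ | z ^ f = 1}

/-- The conductor of a complex-valued function on `G`: the smallest positive integer `f`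
such that all values lie in the `f`-th cyclotomic field. -/
def conductorOf {G : Type} (χ : G → ℂ) : ℕ :=
  sInf {f : ℕ | 0 < f ∧ ∀ g, χ g ∈ cycField f}

/-- The `p`-rationality level of a complex-valued function: `log_p` of the `p`-part of
its conductor. -/
def plev {G : Type} (p : ℕ) (χ : G → ℂ) : ℕ :=
  (conductorOf χ).factorization p

/-- The `p`-rationality level of a complex number `z`: `log_p` of the `p`-part of the
smallest positive integer `f` with `z ∈ ℚ(ζ_f)`. -/
def zlev (p : ℕ) (z : ℂ) : ℕ :=
  (sInf {f : ℕ | 0 < f ∧ z ∈ cycField f}).factorization p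

/-- `χ : G → ℂ` is a (complex) character of `G`. -/
def IsChar (G : Type) [Group G] (χ : G → ℂ) : Prop :=
  ∃ V : FDRep ℂ G, FDRep.character V = χ

/-- `χ : G → ℂ` is an irreducible (complex) character of `G`. -/
def IsIrrChar (G : Type) [Group G] (χ : G → ℂ) : Prop :=
  ∃ V : FDRep ℂ G, CategoryTheory.Simple V ∧ FDRep.character V = χ

/-- A character has odd degree. -/
def HasOddDegree {G : Type} [Group G] (χ : G → ℂ) : Prop :=
  ∃ d : ℕ, Odd d ∧ χ 1 = (d : ℂ)

/-- A character has degree coprime to `p`. -/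
def DegCoprime {G : Type} [Group G] (p : ℕ) (χ : G → ℂ) : Prop :=
  ∃ d : ℕ, ¬ p ∣ d ∧ χ 1 = (d : ℂ)

/-- The usual inner product of complex class functions on a finite group. -/
def charInner (N : Type) [Fintype N] (f g : N → ℂ) : ℂ :=
  (Fintype.card N : ℂ)⁻¹ * ∑ n, f n * (starRingEnd ℂ) (g n)

/-- The order of the determinant (linear) character of a representation. -/
def detOrder {N : Type} [Group N] (V : FDRep ℂ N) : ℕ :=
  orderOf (MonoidHom.comp LinearMap.det (V.ρ : N →* (V →ₗ[ℂ] V)))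

section Aux

lemma abExp_eq_of_mulEquiv {G H : Type*} [Group G] [Group H] (e : G ≃* H) :
    Monoid.exponent (Abelianization G) = Monoid.exponent (Abelianization H) :=
  Monoid.exponent_eq_of_mulEquiv e.abelianizationCongr

lemma ab_of_surjective {G : Type*} [Group G] :
    Function.Surjective (Abelianization.of : G → Abelianization G) :=
  fun y => QuotientGroup.induction_on y fun a => ⟨a, rfl⟩

lemma abExp_dvd_of_surjective {G H : Type*} [Group G] [Group H] (f : G →* H)
    (hf : Function.Surjective f) :
    Monoid.exponent (Abelianization H) ∣ Monoid.exponent (Abelianization G) := by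
  apply MonoidHom.exponent_dvd (f := Abelianization.map f)
  intro y
  obtain ⟨h, rfl⟩ := ab_of_surjective y
  obtain ⟨g, rfl⟩ := hf h
  exact ⟨Abelianization.of g, Abelianization.map_of f g⟩

end Aux

/-- exponents of abelianizations of Sylow subgroups of `G/N`, `G`, `N`. -/
theorem stmt8 (p : ℕ) (hp : p.Prime) (G : Type) [Group G] [Fintype G]
    (N : Subgroup G) [N.Normal]
    (PN : Sylow p ↥N) (PG : Sylow p G) (PQ : Sylow p (G ⧸ N)) :
    Monoid.exponent (Abelianization ↥(PQ : Subgroup (G ⧸ N))) ≤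
        Monoid.exponent (Abelianization ↥(PG : Subgroup G)) ∧
      Monoid.exponent (Abelianization ↥(PG : Subgroup G)) ≤
        Monoid.exponent (Abelianization ↥(PN : Subgroup ↥N)) *
          Monoid.exponent (Abelianization ↥(PQ : Subgroup (G ⧸ N))) := by
  haveI : Fact p.Prime := ⟨hp⟩
  haveI : Finite (Sylow p (G ⧸ N)) :=
    Finite.of_injective (fun (P : Sylow p (G ⧸ N)) => (P : Subgroup (G ⧸ N)))
      (fun P Q h => Sylow.ext h)
  haveI : Finite (Sylow p G) :=
    Finite.of_injective (fun (P : Sylow p G) => (P : Subgroup G)) (fun P Q h => Sylow.ext h)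
  obtain ⟨P, hPNP⟩ := ((PN : Sylow p ↥N).2.map N.subtype).exists_le_sylow
  set f := QuotientGroup.mk' N with hf_def
  have hf : Function.Surjective f := QuotientGroup.mk'_surjective N
  let Q0 : Sylow p (G ⧸ N) := P.mapSurjective hf
  let π : ↥(P : Subgroup G) →* ↥(Q0 : Subgroup (G ⧸ N)) := f.subgroupMap (P : Subgroup G)
  have hπ : Function.Surjective π := f.subgroupMap_surjective (P : Subgroup G)
  have hGP : Monoid.exponent (Abelianization ↥(PG : Subgroup G)) =
      Monoid.exponent (Abelianization ↥(P : Subgroup G)) :=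
    abExp_eq_of_mulEquiv (Sylow.equiv PG P)
  have hQQ : Monoid.exponent (Abelianization ↥(PQ : Subgroup (G ⧸ N))) =
      Monoid.exponent (Abelianization ↥(Q0 : Subgroup (G ⧸ N))) :=
    abExp_eq_of_mulEquiv (Sylow.equiv PQ Q0)
  constructor
  · rw [hQQ, hGP]
    exact Nat.le_of_dvd (Nat.pos_of_ne_zero Monoid.exponent_ne_zero_of_finite)
      (abExp_dvd_of_surjective π hπ)
  · rw [hGP]
    have he1pos : 0 < Monoid.exponent (Abelianization ↥(PN : Subgroup ↥N)) :=
      Nat.pos_of_ne_zero Monoid.exponent_ne_zero_of_finite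
    have he2pos : 0 < Monoid.exponent (Abelianization ↥(PQ : Subgroup (G ⧸ N))) :=
      Nat.pos_of_ne_zero Monoid.exponent_ne_zero_of_finite
    refine Nat.le_of_dvd (Nat.mul_pos he1pos he2pos) ?_
    rw [Monoid.exponent_dvd_iff_forall_pow_eq_one]
    intro x
    obtain ⟨a, rfl⟩ := ab_of_surjective x
    set e1 := Monoid.exponent (Abelianization ↥(PN : Subgroup ↥N)) with he1
    set e2 := Monoid.exponent (Abelianization ↥(PQ : Subgroup (G ⧸ N))) with he2
    -- Step 1: (of a)^e2 = of k for some k with (k : G) ∈ N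
    have hof : (Abelianization.of (π a)) ^ e2 = 1 := by
      rw [hQQ]; exact Monoid.pow_exponent_eq_one _
    have hof' : Abelianization.of ((π a) ^ e2) = 1 := by rwa [map_pow]
    have hmem : (π a) ^ e2 ∈ commutator ↥(Q0 : Subgroup (G ⧸ N)) :=
      (QuotientGroup.eq_one_iff _).mp hof'
    have hcomm : commutator ↥(Q0 : Subgroup (G ⧸ N)) =
        Subgroup.map π (commutator ↥(P : Subgroup G)) := by
      rw [commutator_def, commutator_def, Subgroup.map_commutator,
        Subgroup.map_top_of_surjective π hπ]
    rw [hcomm] at hmem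
    obtain ⟨c, hc, hc2⟩ := hmem
    set k : ↥(P : Subgroup G) := a ^ e2 * c⁻¹ with hk_def
    have hπk : π k = 1 := by
      rw [hk_def, map_mul, map_pow, map_inv, hc2, mul_inv_cancel]
    have hkN : ((k : G) : G) ∈ N := by
      have h1 : f ((k : G)) = 1 := congrArg Subtype.val hπk
      exact (QuotientGroup.eq_one_iff _).mp h1
    have hofk : Abelianization.of k = (Abelianization.of a) ^ e2 := by
      have hc1 : (Abelianization.of c : Abelianization ↥(P : Subgroup G)) = 1 :=
        (QuotientGroup.eq_one_iff c).mpr hc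
      rw [hk_def, map_mul, map_pow, map_inv, hc1, inv_one, mul_one]
    -- Step 2: k lies in a copy of PN inside P
    have hpgroup : IsPGroup p ((P : Subgroup G).subgroupOf N) :=
      P.2.comap_of_ker_isPGroup N.subtype
        (IsPGroup.ker_isPGroup_of_injective Subtype.coe_injective)
    have hle : (PN : Subgroup ↥N) ≤ (P : Subgroup G).subgroupOf N := by
      intro s hs
      rw [Subgroup.mem_subgroupOf]
      exact hPNP (Subgroup.mem_map_of_mem N.subtype hs)
    have hsub : (P : Subgroup G).subgroupOf N = (PN : Subgroup ↥N) := PN.3 hpgroup hle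
    have hkPN : (⟨(k : G), hkN⟩ : ↥N) ∈ (PN : Subgroup ↥N) := by
      rw [← hsub, Subgroup.mem_subgroupOf]
      exact (k : ↥(P : Subgroup G)).2
    -- Step 3: map PN into the abelianization of P
    let ι : ↥(PN : Subgroup ↥N) →* G := N.subtype.comp (PN : Subgroup ↥N).subtype
    have hι : ∀ s, ι s ∈ (P : Subgroup G) := fun s =>
      hPNP (Subgroup.mem_map_of_mem N.subtype s.2)
    let μ : ↥(PN : Subgroup ↥N) →* Abelianization ↥(P : Subgroup G) :=
      Abelianization.of.comp (ι.codRestrict (P : Subgroup G) hι)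
    have hμ : ∀ s, μ s ^ e1 = 1 := by
      intro s
      have : μ s = (Abelianization.lift μ) (Abelianization.of s) :=
        (Abelianization.lift_apply_of μ s).symm
      rw [this, ← map_pow, he1, Monoid.pow_exponent_eq_one, map_one]
    set s : ↥(PN : Subgroup ↥N) := ⟨⟨(k : G), hkN⟩, hkPN⟩ with hs_def
    have hμs : μ s = Abelianization.of k := by
      apply congrArg Abelianization.of
      exact Subtype.ext rfl
    calc (Abelianization.of a) ^ (e1 * e2)
        = ((Abelianization.of a) ^ e2) ^ e1 := by rw [← pow_mul, mul_comm]
      _ = μ s ^ e1 := by rw [← hofk, hμs]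
      _ = 1 := hμ s
end
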